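/- Odd-part decomposition of a generalized hypergeometric series: let q ≥ 0 be an integer, let a₁,…,a_{q+1} be real numbers, let b₁,…,b_q be positive real numbers, and let z be a real number with |z| < 1. Then ∑_{n≥0} ((a₁)ₙ⋯(a_{q+1})ₙ)/((b₁)ₙ⋯(b_q)ₙ) · zⁿ/n! − ∑_{n≥0} ((a₁)ₙ⋯(a_{q+1})ₙ)/((b₁)ₙ⋯(b_q)ₙ) · (−z)ⁿ/n! = 2z·(a₁a₂⋯a_{q+1})/(b₁b₂⋯b_q) · ∑_{n≥0} [∏_{j=1}^{q+1} (a_j/2+1/2)ₙ·(a_j/2+1)ₙ] / [(3/2)ₙ·∏_{k=1}^{q} (b_k/2+1/2)ₙ·(b_k/2+1)ₙ] · (z²)ⁿ/n!. -/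
import Mathlib


open Real Filter Topology

/-- The Pochhammer symbol (shifted factorial) `(a)ₙ` for a real number `a`. -/
noncomputable def poch (a : ℝ) (n : ℕ) : ℝ := Polynomial.eval a (ascPochhammer ℝ n)

lemma poch_zero (a : ℝ) : poch a 0 = 1 := by simp [poch]

lemma poch_succ (a : ℝ) (n : ℕ) : poch a (n+1) = poch a n * (a + n) := by
  simp [poch, ascPochhammer_succ_eval]

lemma poch_pos {a : ℝ} (ha : 0 < a) (n : ℕ) : 0 < poch a n := by
  induction n with
  | zero => simp [poch_zero]
  | succ n ih =>
      rw [poch_succ]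
      exact mul_pos ih (by positivity)

lemma poch_odd (a : ℝ) (m : ℕ) :
    poch a (2*m+1) = a * 4^m * (poch (a/2+1/2) m * poch (a/2+1) m) := by
  induction m with
  | zero => simp [poch_succ, poch_zero]
  | succ m ih =>
      have h2 : 2*(m+1)+1 = (2*m+1) + 1 + 1 := by ring
      rw [h2, poch_succ, poch_succ, ih, poch_succ, poch_succ]
      push_cast
      ring

lemma fact_odd (m : ℕ) : ((2*m+1).factorial : ℝ) = 4^m * m.factorial * poch (3/2) m := by
  induction m with
  | zero => simp [poch_zero]
  | succ m ih =>
      have h2 : 2*(m+1)+1 = (2*m+1) + 1 + 1 := by ring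
      rw [h2, Nat.factorial_succ, Nat.factorial_succ, Nat.factorial_succ m, poch_succ]
      push_cast
      rw [ih]
      ring

lemma tend_a (c : ℝ) : Tendsto (fun n : ℕ => (c + n)/((n:ℝ)+1)) atTop (𝓝 1) := by
  have h0 : Tendsto (fun n : ℕ => 1 + (c - 1) * (1/((n:ℝ)+1))) atTop (𝓝 (1 + (c-1) * 0)) :=
    tendsto_const_nhds.add (tendsto_const_nhds.mul tendsto_one_div_add_atTop_nhds_zero_nat)
  rw [mul_zero, add_zero] at h0
  refine h0.congr fun n => ?_
  have hn : ((n:ℝ)+1) ≠ 0 := by positivity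
  field_simp
  ring

lemma tend_b {c : ℝ} (hc : 0 < c) : Tendsto (fun n : ℕ => ((n:ℝ)+1)/(c + n)) atTop (𝓝 1) := by
  have ht : Tendsto (fun n : ℕ => c + (n:ℝ)) atTop atTop :=
    tendsto_atTop_add_const_left _ c tendsto_natCast_atTop_atTop
  have h0 : Tendsto (fun n : ℕ => 1 + (1 - c) * (c + (n:ℝ))⁻¹) atTop (𝓝 (1 + (1-c) * 0)) :=
    tendsto_const_nhds.add (tendsto_const_nhds.mul ht.inv_tendsto_atTop)
  rw [mul_zero, add_zero] at h0
  refine h0.congr fun n => ?_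
  have hn : (c + (n:ℝ)) ≠ 0 := by positivity
  field_simp
  ring

lemma aux_summable (q : ℕ) (a : Fin (q + 1) → ℝ) (b : Fin q → ℝ)
    (hb : ∀ k, 0 < b k) (w : ℝ) (hw : |w| < 1) :
    Summable (fun n : ℕ =>
      (∏ j, poch (a j) n) / ((∏ k, poch (b k) n) * (n.factorial : ℝ)) * w^n) := by
  set f : ℕ → ℝ := fun n =>
      (∏ j, poch (a j) n) / ((∏ k, poch (b k) n) * (n.factorial : ℝ)) * w^n with hf
  set g : ℕ → ℝ := fun n =>
      (∏ j, ((a j + n)/((n:ℝ)+1))) * (∏ k, (((n:ℝ)+1)/(b k + n))) * w with hg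
  have hkey : ∀ n : ℕ, f (n+1) = f n * g n := by
    intro n
    have e1 : ∏ j, poch (a j) (n+1) = (∏ j, poch (a j) n) * ∏ j, (a j + (n:ℝ)) := by
      rw [← Finset.prod_mul_distrib]
      exact Finset.prod_congr rfl fun j _ => poch_succ _ n
    have e2 : ∏ k, poch (b k) (n+1) = (∏ k, poch (b k) n) * ∏ k, (b k + (n:ℝ)) := by
      rw [← Finset.prod_mul_distrib]
      exact Finset.prod_congr rfl fun k _ => poch_succ _ n
    have hQ : (0:ℝ) < ∏ k, poch (b k) n := Finset.prod_pos fun k _ => poch_pos (hb k) n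
    have hB : (0:ℝ) < ∏ k, (b k + (n:ℝ)) :=
      Finset.prod_pos fun k _ => by have := hb k; positivity
    have hfac : (((n+1).factorial : ℕ) : ℝ) = (n.factorial : ℝ) * ((n:ℝ)+1) := by
      push_cast [Nat.factorial_succ]; ring
    have hfacpos : (0:ℝ) < (n.factorial : ℝ) := by positivity
    have hn1 : ((n:ℝ)+1) ≠ 0 := by positivity
    simp only [hf, hg]
    rw [e1, e2, hfac, pow_succ,
      Finset.prod_div_distrib, Finset.prod_div_distrib, Finset.prod_const, Finset.prod_const,
      Finset.card_univ, Fintype.card_fin, Finset.card_univ, Fintype.card_fin]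
    field_simp
    ring
  have htend : Tendsto (fun n => |g n|) atTop (𝓝 |w|) := by
    have h1 : Tendsto (fun n : ℕ => ∏ j, ((a j + n)/((n:ℝ)+1))) atTop (𝓝 (∏ _j : Fin (q+1), (1:ℝ))) :=
      tendsto_finset_prod _ fun j _ => tend_a (a j)
    have h2 : Tendsto (fun n : ℕ => ∏ k, (((n:ℝ)+1)/(b k + n))) atTop (𝓝 (∏ _k : Fin q, (1:ℝ))) :=
      tendsto_finset_prod _ fun k _ => tend_b (hb k)
    have h3 : Tendsto g atTop (𝓝 ((∏ _j : Fin (q+1), (1:ℝ)) * (∏ _k : Fin q, (1:ℝ)) * w)) :=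
      (h1.mul h2).mul_const w
    simp only [Finset.prod_const_one, one_mul] at h3
    exact h3.abs
  set r : ℝ := (1 + |w|)/2 with hrdef
  have hr1 : r < 1 := by rw [hrdef]; linarith
  have hwr : |w| < r := by rw [hrdef]; linarith
  apply summable_of_ratio_norm_eventually_le hr1
  filter_upwards [htend.eventually_lt_const hwr] with n hn
  rw [hkey n, Real.norm_eq_abs, Real.norm_eq_abs, abs_mul]
  have h0 : (0:ℝ) ≤ |f n| := abs_nonneg _
  nlinarith [abs_nonneg (g n)]

set_option maxHeartbeats 1000000 in
/-- Odd-part decomposition of a generalized hypergeometric series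
`₍q+1₎F_q(a₁,…,a_{q+1}; b₁,…,b_q; z)`. -/
theorem odd_part_decomposition (q : ℕ) (a : Fin (q + 1) → ℝ) (b : Fin q → ℝ)
    (hb : ∀ k, 0 < b k) (z : ℝ) (hz : |z| < 1) :
    (∑' n : ℕ, (∏ j, poch (a j) n) / ((∏ k, poch (b k) n) * (n.factorial : ℝ)) * z^n)
      - (∑' n : ℕ, (∏ j, poch (a j) n) / ((∏ k, poch (b k) n) * (n.factorial : ℝ)) * (-z)^n)
      = 2 * z * ((∏ j, a j) / (∏ k, b k)) * ∑' n : ℕ,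
          (∏ j, poch (a j / 2 + 1/2) n * poch (a j / 2 + 1) n) /
            (poch (3/2) n * (∏ k, poch (b k / 2 + 1/2) n * poch (b k / 2 + 1) n) *
              (n.factorial : ℝ)) * (z^2)^n := by
  have hsz := aux_summable q a b hb z hz
  have hsnz := aux_summable q a b hb (-z) (by rwa [abs_neg])
  rw [← Summable.tsum_sub hsz hsnz]
  set h : ℕ → ℝ := fun n =>
    (∏ j, poch (a j) n) / ((∏ k, poch (b k) n) * (n.factorial : ℝ)) * z^n
      - (∏ j, poch (a j) n) / ((∏ k, poch (b k) n) * (n.factorial : ℝ)) * (-z)^n with hh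
  have hinj : Function.Injective (fun m : ℕ => 2*m+1) := fun x y hxy => by
    simpa using hxy
  have hsupp : Function.support h ⊆ Set.range (fun m : ℕ => 2*m+1) := by
    intro n hn
    by_contra hc
    apply hn
    have hev : Even n := by
      rcases Nat.even_or_odd n with he | ho
      · exact he
      · exact absurd (by obtain ⟨m, hm⟩ := ho; exact ⟨m, hm.symm⟩) hc
    simp only [hh, hev.neg_pow, sub_self]
  rw [← hinj.tsum_eq hsupp, ← tsum_mul_left]
  refine tsum_congr fun m => ?_
  have hodd : Odd (2*m+1) := ⟨m, by ring⟩
  have ea : ∏ j, poch (a j) (2*m+1)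
      = (∏ j, a j) * ((4:ℝ)^m)^(q+1)
        * ∏ j, (poch (a j / 2 + 1/2) m * poch (a j / 2 + 1) m) := by
    rw [show (∏ j, poch (a j) (2*m+1))
        = ∏ j, (a j * 4^m * (poch (a j / 2 + 1/2) m * poch (a j / 2 + 1) m)) from
      Finset.prod_congr rfl fun j _ => poch_odd _ m]
    rw [Finset.prod_mul_distrib, Finset.prod_mul_distrib, Finset.prod_const,
      Finset.card_univ, Fintype.card_fin]
  have eb : ∏ k, poch (b k) (2*m+1)
      = (∏ k, b k) * ((4:ℝ)^m)^q
        * ∏ k, (poch (b k / 2 + 1/2) m * poch (b k / 2 + 1) m) := by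
    rw [show (∏ k, poch (b k) (2*m+1))
        = ∏ k, (b k * 4^m * (poch (b k / 2 + 1/2) m * poch (b k / 2 + 1) m)) from
      Finset.prod_congr rfl fun k _ => poch_odd _ m]
    rw [Finset.prod_mul_distrib, Finset.prod_mul_distrib, Finset.prod_const,
      Finset.card_univ, Fintype.card_fin]
  have hz2 : z^(2*m+1) = (z^2)^m * z := by rw [pow_succ, pow_mul]
  have hPb : (0:ℝ) < ∏ k, b k := Finset.prod_pos fun k _ => hb k
  have hB : (0:ℝ) < ∏ k, (poch (b k / 2 + 1/2) m * poch (b k / 2 + 1) m) :=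
    Finset.prod_pos fun k _ => mul_pos
      (poch_pos (by have := hb k; linarith) m) (poch_pos (by have := hb k; linarith) m)
  have h32 : (0:ℝ) < poch (3/2 : ℝ) m := poch_pos (by norm_num) m
  have hfm : (0:ℝ) < (m.factorial : ℝ) := by positivity
  have h4 : ((4:ℝ)^m) ≠ 0 := by positivity
  simp only [hh, ea, eb, fact_odd, hodd.neg_pow, hz2, mul_neg, sub_neg_eq_add]
  set A : ℝ := ∏ j, poch (a j / 2 + 1/2) m * poch (a j / 2 + 1) m with hA
  set B : ℝ := ∏ k, poch (b k / 2 + 1/2) m * poch (b k / 2 + 1) m with hBdef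
  set PA : ℝ := ∏ j, a j with hPA
  set PB : ℝ := ∏ k, b k with hPBdef
  set T : ℝ := poch (3/2 : ℝ) m with hT
  set F : ℝ := (m.factorial : ℝ) with hF
  field_simp
  ring
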